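/- Let f : ℝ^d → ℝ be convex and (L₀,L₁)-smooth. Then for any x, y ∈ ℝ^d: ‖∇f(y) - ∇f(x)‖² / (2(L₀ + L₁‖∇f(y)‖) + L₁‖∇f(y) - ∇f(x)‖) ≤ f(y) - f(x) - ⟨∇f(x), y - x⟩. -/

import Mathlib

set_option maxHeartbeats 1000000

open RealInnerProductSpace Set

noncomputable section

section aux

lemma log_key : ∀ u : ℝ, 1 ≤ u → 2 * (u - 1) / (u + 1) ≤ Real.log u := by
  have hF : ∀ u : ℝ, 0 < u → HasDerivAt (fun u : ℝ => Real.log u - 2 * (u - 1) / (u + 1))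
      (1 / u - 4 / (u + 1) ^ 2) u := by
    intro u hu
    have h1 : HasDerivAt Real.log (1 / u) u := by
      simpa [one_div] using Real.hasDerivAt_log (ne_of_gt hu)
    have h2 : HasDerivAt (fun u : ℝ => 2 * (u - 1) / (u + 1)) (4 / (u + 1) ^ 2) u := by
      have hnum : HasDerivAt (fun u : ℝ => 2 * (u - 1)) 2 u := by
        simpa using (((hasDerivAt_id u).sub_const 1).const_mul (2 : ℝ))
      have hden : HasDerivAt (fun u : ℝ => u + 1) 1 u := (hasDerivAt_id u).add_const 1
      have hne : u + 1 ≠ 0 := by linarith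
      have := hnum.div hden hne
      rw [show (4:ℝ) / (u + 1) ^ 2 = (2 * (u + 1) - 2 * (u - 1) * 1) / (u + 1) ^ 2 by ring]
      exact this
    exact h1.sub h2
  intro u hu
  have hmono : MonotoneOn (fun u : ℝ => Real.log u - 2 * (u - 1) / (u + 1)) (Ici 1) := by
    apply monotoneOn_of_deriv_nonneg (convex_Ici 1)
    · intro v hv
      exact ((hF v (by simp at hv; linarith)).continuousAt).continuousWithinAt
    · intro v hv
      rw [interior_Ici] at hv
      exact ((hF v (by simp at hv; linarith)).differentiableAt).differentiableWithinAt
    · intro v hv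
      rw [interior_Ici] at hv
      simp only [mem_Ioi] at hv
      rw [(hF v (by linarith)).deriv]
      have h1 : (0:ℝ) < v := by linarith
      have h2 : (0:ℝ) < (v + 1) ^ 2 := by positivity
      rw [sub_nonneg, div_le_div_iff₀ h2 h1]
      nlinarith
  have := hmono (by simp) (mem_Ici.2 hu) hu
  simp at this
  linarith

lemma exp_key {ρ : ℝ} (hρ : 0 ≤ ρ) : Real.exp (2 * ρ / (2 + ρ)) ≤ 1 + ρ := by
  have h := log_key (1 + ρ) (by linarith)
  have h2 : 2 * (1 + ρ - 1) / (1 + ρ + 1) = 2 * ρ / (2 + ρ) := by ring_nf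
  rw [h2] at h
  calc Real.exp (2 * ρ / (2 + ρ)) ≤ Real.exp (Real.log (1 + ρ)) := Real.exp_le_exp.2 h
    _ = 1 + ρ := Real.exp_log (by linarith)

variable {E : Type*} [NormedAddCommGroup E] [InnerProductSpace ℝ E] [CompleteSpace E]

lemma grad_inner (f : E → ℝ) (x v : E) : fderiv ℝ f x v = ⟪gradient f x, v⟫ := by
  rw [gradient]
  exact (InnerProductSpace.toDual_symm_apply).symm

lemma contDiff_gradient (f : E → ℝ) (hf : ContDiff ℝ 2 f) : ContDiff ℝ 1 (gradient f) := by
  have h1 : ContDiff ℝ 1 (fderiv ℝ f) := hf.fderiv_right (by norm_num)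
  exact ((InnerProductSpace.toDual ℝ E).symm.contDiff).comp h1

omit [CompleteSpace E] in
lemma curve_hasDerivAt (y w : E) (s : ℝ) :
    HasDerivAt (fun s : ℝ => y + s • w) w s := by
  simpa using ((hasDerivAt_id s).smul_const w).const_add y

lemma comp_hasDerivAt (f : E → ℝ) (hd : Differentiable ℝ f) (y w : E) (s : ℝ) :
    HasDerivAt (fun s : ℝ => f (y + s • w)) ⟪gradient f (y + s • w), w⟫ s := by
  have h := (hd (y + s • w)).hasFDerivAt.comp_hasDerivAt s (curve_hasDerivAt y w s)
  rwa [grad_inner] at h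

lemma convex_lb (f : E → ℝ) (hd : Differentiable ℝ f) (hconv : ConvexOn ℝ Set.univ f)
    (a b : E) : ⟪gradient f a, b - a⟫ ≤ f b - f a := by
  have hq : ConvexOn ℝ Set.univ (fun s : ℝ => f (a + s • (b - a))) := by
    have := hconv.comp_affineMap (AffineMap.lineMap a b : ℝ →ᵃ[ℝ] E)
    simp only [AffineMap.coe_lineMap, Function.comp] at this
    have h2 : (fun s : ℝ => f (s • (b - a) + a)) = fun s : ℝ => f (a + s • (b - a)) := by
      funext s; rw [add_comm]
    rw [← h2]
    exact this
  have hderiv := comp_hasDerivAt f hd a (b - a) 0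
  have := hq.le_slope_of_hasDerivAt (mem_univ (0:ℝ)) (mem_univ (1:ℝ)) zero_lt_one
    (by simpa using hderiv)
  simp only [slope_def_field] at this
  simp only [zero_smul, add_zero] at this
  simpa using this

end aux

/-- For convex (L₀,L₁)-smooth f:
    ‖∇f(y) - ∇f(x)‖² / (2(L₀ + L₁‖∇f(y)‖) + L₁‖∇f(y) - ∇f(x)‖)
      ≤ f(y) - f(x) - ⟨∇f(x), y - x⟩. -/
theorem stmt_9 (d : ℕ) (L0 L1 : ℝ) (hL0 : 0 < L0) (hL1 : 0 ≤ L1)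
    (f : EuclideanSpace ℝ (Fin d) → ℝ) (hf : ContDiff ℝ 2 f)
    (hconv : ConvexOn ℝ Set.univ f)
    (hsmooth : ∀ x : EuclideanSpace ℝ (Fin d),
      ‖fderiv ℝ (gradient f) x‖ ≤ L0 + L1 * ‖gradient f x‖) :
    ∀ x y : EuclideanSpace ℝ (Fin d),
      ‖gradient f y - gradient f x‖ ^ 2 /
          (2 * (L0 + L1 * ‖gradient f y‖) + L1 * ‖gradient f y - gradient f x‖) ≤
        f y - f x - ⟪gradient f x, y - x⟫ := by
  intro x y
  have hd : Differentiable ℝ f := hf.differentiable (by norm_num)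
  set g := gradient f with hgdef
  have hg1 : ContDiff ℝ 1 g := contDiff_gradient f hf
  have hgd : Differentiable ℝ g := hg1.differentiable (by norm_num)
  have hgc : Continuous g := hgd.continuous
  set G := ‖g y - g x‖ with hGdef
  set A := L0 + L1 * ‖g y‖ with hAdef
  have hA : 0 < A := add_pos_of_pos_of_nonneg hL0 (mul_nonneg hL1 (norm_nonneg _))
  set D := 2 * A + L1 * G with hDdef
  have hG0 : (0:ℝ) ≤ G := norm_nonneg _
  have hLG : (0:ℝ) ≤ L1 * G := mul_nonneg hL1 hG0
  have hD : 0 < D := by rw [hDdef]; linarith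
  rcases eq_or_lt_of_le hG0 with hG | hG
  · -- G = 0 case
    have h1 := convex_lb f hd hconv x y
    have h0 : G ^ 2 / D = 0 := by rw [← hG]; simp
    rw [h0]
    linarith
  · -- G > 0
    set t := 2 * G / D with htdef
    have ht : 0 < t := by positivity
    set w := -(t / G) • (g y - g x) with hwdef
    have hwn : ‖w‖ = t := by
      rw [hwdef, norm_smul, Real.norm_eq_abs, abs_neg, abs_of_pos (by positivity)]
      rw [← hGdef]
      field_simp
    set γ := fun s : ℝ => y + s • w with hγdef
    have hγc : Continuous γ := by
      rw [hγdef]; exact continuous_const.add (continuous_id.smul continuous_const)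
    have hγ0 : γ 0 = y := by simp [hγdef]
    -- key exp inequality
    have hKey : Real.exp (L1 * t) ≤ 1 + L1 * G / A := by
      rcases eq_or_lt_of_le hL1 with h0 | h0
      · rw [← h0]; simp
      · have hρ : 0 ≤ L1 * G / A := by positivity
        have h := exp_key hρ
        have harg : 2 * (L1 * G / A) / (2 + L1 * G / A) = L1 * t := by
          rw [htdef, hDdef]
          field_simp
        rwa [harg] at h
    -- Gronwall bound
    have hφderiv : ∀ s : ℝ, HasDerivAt (fun s => g (γ s) - g y) ((fderiv ℝ g (γ s)) w) s := by
      intro s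
      have h := (hgd (γ s)).hasFDerivAt.comp_hasDerivAt s (curve_hasDerivAt y w s)
      exact h.sub_const (g y)
    have hgron := norm_le_gronwallBound_of_norm_deriv_right_le
      (f := fun s => g (γ s) - g y) (f' := fun s => (fderiv ℝ g (γ s)) w)
      (δ := 0) (K := L1 * t) (ε := A * t) (a := 0) (b := 1)
      (((hgc.comp hγc).sub continuous_const).continuousOn)
      (fun s _ => (hφderiv s).hasDerivWithinAt)
      (by simp [hγ0])
      (by
        intro s _
        have h1 : ‖(fderiv ℝ g (γ s)) w‖ ≤ ‖fderiv ℝ g (γ s)‖ * ‖w‖ :=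
          (fderiv ℝ g (γ s)).le_opNorm w
        have h2 := hsmooth (γ s)
        have h3 : ‖g (γ s)‖ ≤ ‖g y‖ + ‖g (γ s) - g y‖ := by
          have : g (γ s) = g y + (g (γ s) - g y) := by abel
          calc ‖g (γ s)‖ = ‖g y + (g (γ s) - g y)‖ := by rw [← this]
            _ ≤ ‖g y‖ + ‖g (γ s) - g y‖ := norm_add_le _ _
        rw [hwn] at h1
        have h5 : (0:ℝ) ≤ ‖g (γ s) - g y‖ := norm_nonneg _
        have h6 : ‖fderiv ℝ g (γ s)‖ * t ≤ (L0 + L1 * ‖g (γ s)‖) * t :=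
          mul_le_mul_of_nonneg_right h2 ht.le
        have h7 : L1 * ‖g (γ s)‖ ≤ L1 * (‖g y‖ + ‖g (γ s) - g y‖) :=
          mul_le_mul_of_nonneg_left h3 hL1
        have h8 := mul_le_mul_of_nonneg_right h7 ht.le
        show ‖(fderiv ℝ g (γ s)) w‖ ≤ L1 * t * ‖g (γ s) - g y‖ + A * t
        rw [hAdef]
        nlinarith)
    have hφbound : ∀ s ∈ Icc (0:ℝ) 1, ‖g (γ s) - g y‖ ≤ s * G := by
      intro s hs
      obtain ⟨hs0, hs1⟩ := hs
      have hb := hgron s ⟨hs0, hs1⟩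
      simp only [sub_zero] at hb
      refine hb.trans ?_
      by_cases hK : L1 * t = 0
      · rw [hK, gronwallBound_K0]
        have hAt : A * t ≤ G := by
          rw [htdef, ← mul_div_assoc, div_le_iff₀ hD]
          nlinarith [mul_nonneg hLG hG0]
        have := mul_le_mul_of_nonneg_left hAt hs0
        show 0 + A * t * s ≤ s * G
        nlinarith
      · have hL1pos : 0 < L1 := lt_of_le_of_ne hL1 (by
          intro h; exact hK (by rw [← h]; ring))
        rw [gronwallBound_of_K_ne_0 hK]
        have hconvexp : Real.exp (L1 * t * s) ≤ (1 - s) + s * Real.exp (L1 * t) := by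
          have hc := convexOn_exp.2 (mem_univ (0:ℝ)) (mem_univ (L1 * t))
            (sub_nonneg.2 hs1) hs0 (by ring)
          have e1 : L1 * t * s = (1 - s) * 0 + s * (L1 * t) := by ring
          rw [e1]
          simpa using hc
        have hexp1 : Real.exp (L1 * t * s) - 1 ≤ s * (L1 * G / A) := by
          have h6 : Real.exp (L1 * t) - 1 ≤ L1 * G / A := by linarith [hKey]
          nlinarith [Real.exp_nonneg (L1 * t)]
        have hAL : (0:ℝ) ≤ A * t / (L1 * t) := by positivity
        calc (0:ℝ) * Real.exp (L1 * t * s) + A * t / (L1 * t) * (Real.exp (L1 * t * s) - 1)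
            = A / L1 * (Real.exp (L1 * t * s) - 1) := by
              rw [zero_mul, zero_add]
              congr 1
              field_simp
            _ ≤ A / L1 * (s * (L1 * G / A)) := by
              apply mul_le_mul_of_nonneg_left hexp1 (by positivity)
            _ = s * G := by field_simp
    -- FTC and integrals
    have hcont1 : Continuous fun s : ℝ => ⟪g (γ s), w⟫ :=
      (hgc.comp hγc).inner continuous_const
    have hcont2 : Continuous fun s : ℝ => ⟪g (γ s) - g x, w⟫ :=
      ((hgc.comp hγc).sub continuous_const).inner continuous_const
    have hFTC : ∫ s in (0:ℝ)..1, ⟪g (γ s), w⟫ = f (γ 1) - f (γ 0) :=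
      intervalIntegral.integral_eq_sub_of_hasDerivAt
        (f := fun s : ℝ => f (γ s)) (f' := fun s : ℝ => ⟪g (γ s), w⟫)
        (fun s _ => by simpa [hγdef, hgdef] using comp_hasDerivAt f hd y w s)
        (hcont1.intervalIntegrable 0 1)
    have hinner_yx : ⟪g y - g x, w⟫ = -(t * G) := by
      rw [hwdef, real_inner_smul_right, real_inner_self_eq_norm_sq, ← hGdef]
      field_simp
    have hub : ∀ s ∈ Icc (0:ℝ) 1, ⟪g (γ s) - g x, w⟫ ≤ t * G * s - t * G := by
      intro s hs
      have h1 : ⟪g (γ s) - g x, w⟫ = ⟪g (γ s) - g y, w⟫ + ⟪g y - g x, w⟫ := by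
        rw [← inner_add_left]
        congr 1
        abel
      have h3 : ⟪g (γ s) - g y, w⟫ ≤ s * G * t := by
        calc ⟪g (γ s) - g y, w⟫ ≤ ‖g (γ s) - g y‖ * ‖w‖ := real_inner_le_norm _ _
          _ ≤ s * G * t := by
            rw [hwn]
            exact mul_le_mul_of_nonneg_right (hφbound s hs) ht.le
      rw [h1, hinner_yx]
      linarith
    have hcub : Continuous (fun s : ℝ => t * G * s - t * G) := by fun_prop
    have hcub1 : Continuous (fun s : ℝ => t * G * s) := by fun_prop
    have hIntBound : ∫ s in (0:ℝ)..1, ⟪g (γ s) - g x, w⟫ ≤ -(t * G) / 2 := by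
      have hmono := intervalIntegral.integral_mono_on (μ := MeasureTheory.volume)
        (by norm_num : (0:ℝ) ≤ 1)
        (hcont2.intervalIntegrable 0 1)
        (hcub.intervalIntegrable 0 1)
        hub
      have hcalc : ∫ s in (0:ℝ)..1, (t * G * s - t * G) = -(t * G) / 2 := by
        have e1 : (∫ s in (0:ℝ)..1, t * G * s) = t * G / 2 := by
          open intervalIntegral in rw [integral_const_mul, integral_id]
          ring
        have e2 : (∫ s in (0:ℝ)..1, (t * G : ℝ)) = t * G := by
          open intervalIntegral in rw [integral_const]
          norm_num
        rw [intervalIntegral.integral_sub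
          (hcub1.intervalIntegrable 0 1)
          ((continuous_const (y := t * G)).intervalIntegrable 0 1), e1, e2]
        ring
      linarith [hmono, hcalc.le, hcalc.ge]
    have hsplit : ∫ s in (0:ℝ)..1, ⟪g (γ s) - g x, w⟫
        = (∫ s in (0:ℝ)..1, ⟪g (γ s), w⟫) - ⟪g x, w⟫ := by
      have : ∀ s : ℝ, ⟪g (γ s) - g x, w⟫ = ⟪g (γ s), w⟫ - ⟪g x, w⟫ := by
        intro s; rw [inner_sub_left]
      simp_rw [this]
      rw [intervalIntegral.integral_sub (hcont1.intervalIntegrable 0 1)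
        ((continuous_const).intervalIntegrable 0 1)]
      simp
    -- convexity at x against γ 1
    have hconvx := convex_lb f hd hconv x (γ 1)
    rw [← hgdef] at hconvx
    have hγ1 : γ 1 = y + w := by simp [hγdef]
    have hinner_split : ⟪g x, γ 1 - x⟫ = ⟪g x, y - x⟫ + ⟪g x, w⟫ := by
      rw [← inner_add_right]
      congr 1
      rw [hγ1]
      abel
    have hgoal : G ^ 2 / D = t * G / 2 := by
      rw [htdef]
      field_simp
    rw [hgoal]
    rw [hinner_split] at hconvx
    rw [hγ0] at hFTC
    linarith [hIntBound, hsplit ▸ hIntBound]
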